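/- Let R be an integral domain, G a finite group, and M a left R[G]-module which is finitely generated and projective as an R-module and projective as an R[G]-module. Let G act on Hom_R(M, R) by (g•f)(m) = f(g⁻¹•m). Then for every G-invariant f ∈ Hom_R(M, R) there is a unique R-linear functional f' on M^G with f'(σ•m) = f(m) for all m ∈ M, and the assignment f ↦ f' is an R-module isomorphism from (Hom_R(M, R))^G onto Hom_R(M^G, R). -/

import Mathlib

set_option linter.unusedSectionVars false

namespace DualInvAux6

open Finsupp

variable {R : Type*} [CommRing R] {G : Type*} [Group G] [Fintype G]
  {M : Type*} [AddCommGroup M] [Module R M]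

lemma decompA (a : MonoidAlgebra R G) : a = ∑ g : G, MonoidAlgebra.single g (a.coeff g) := by
  have h := MonoidAlgebra.sum_coeff_single a
  rw [Finsupp.sum_fintype] at h
  · exact h.symm
  · intro i; exact MonoidAlgebra.single_zero i

lemma coeff_one (a : MonoidAlgebra R G) :
    ((∑ g : G, MonoidAlgebra.single g (1 : R)) * a).coeff 1 = ∑ g : G, a.coeff g := by
  rw [Finset.sum_mul, MonoidAlgebra.coeff_sum, Finsupp.finset_sum_apply]
  refine Fintype.sum_equiv (Equiv.inv G) _ _ fun g => ?_
  rw [MonoidAlgebra.coeff_single_mul_apply, one_mul, mul_one]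
  rfl

lemma K1 (a : MonoidAlgebra R G) (h : ∀ g : G, MonoidAlgebra.single g (1:R) * a = a) :
    a = (∑ g : G, MonoidAlgebra.single g (1:R)) * MonoidAlgebra.single 1 (a.coeff 1) := by
  ext h'
  rw [Finset.sum_mul, MonoidAlgebra.coeff_sum, Finsupp.finset_sum_apply]
  have lhs : a.coeff h' = a.coeff 1 := by
    conv_lhs => rw [← h h']
    rw [MonoidAlgebra.coeff_single_mul_apply, one_mul, inv_mul_cancel]
  rw [lhs]
  have : ∀ g : G, (MonoidAlgebra.single g (1:R) * MonoidAlgebra.single (1:G) (a.coeff 1)).coeff h'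
      = (MonoidAlgebra.single g (a.coeff 1) : MonoidAlgebra R G).coeff h' := by
    intro g; rw [MonoidAlgebra.single_mul_single, mul_one, one_mul]
  simp [this, MonoidAlgebra.coeff_single, Finsupp.single_apply]

lemma sigma_smul (ρ : Representation R G M) (z : ρ.asModule) :
    ρ.asModuleEquiv ((∑ g : G, MonoidAlgebra.single g (1:R)) • z)
      = ∑ g : G, ρ g (ρ.asModuleEquiv z) := by
  rw [Representation.asModuleEquiv_map_smul, map_sum]
  simp [Representation.asAlgebraHom_single]

lemma fsmul (ρ : Representation R G M) (f : Module.Dual R M)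
    (hf : ∀ (g : G) (x : M), f (ρ g x) = f x) (a : MonoidAlgebra R G) (x : M) :
    f (ρ.asAlgebraHom a x) = (∑ g : G, a.coeff g) * f x := by
  conv_lhs => rw [decompA a]
  rw [map_sum, LinearMap.sum_apply, map_sum, Finset.sum_mul]
  refine Finset.sum_congr rfl fun g _ => ?_
  rw [Representation.asAlgebraHom_single]
  simp [hf]

lemma aux_ker (ρ : Representation R G M)
    (hproj : Module.Projective (MonoidAlgebra R G) ρ.asModule)
    (f : Module.Dual R M) (hf : ∀ (g : G) (x : M), f (ρ g x) = f x)
    (m : M) (hm : ∑ g : G, ρ g m = 0) : f m = 0 := by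
  obtain ⟨s, hs⟩ := hproj.out
  set A := MonoidAlgebra R G
  set σA : A := ∑ g : G, MonoidAlgebra.single g 1 with hσA
  set m' : ρ.asModule := ρ.asModuleEquiv.symm m with hm'def
  have hm' : ρ.asModuleEquiv m' = m := ρ.asModuleEquiv.apply_symm_apply m
  have hσm : σA • m' = 0 := by
    apply ρ.asModuleEquiv.injective
    rw [sigma_smul, map_zero, hm', hm]
  have hσy : σA • s m' = 0 := by rw [← map_smul, hσm, map_zero]
  have hε : ∀ n, ∑ g : G, (s m' n).coeff g = 0 := by
    intro n
    have h1 : (σA • s m') n = 0 := by rw [hσy]; rfl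
    rw [Finsupp.smul_apply, smul_eq_mul] at h1
    have h2 := coeff_one ((s m') n)
    rw [← hσA, h1] at h2
    simpa using h2.symm
  have key : f m = (s m').sum fun n a => f (ρ.asModuleEquiv (a • n)) := by
    conv_lhs => rw [← hm', ← hs m', Finsupp.linearCombination_apply]
    rw [map_finsuppSum, map_finsuppSum]
    rfl
  rw [key]
  rw [Finsupp.sum]
  refine Finset.sum_eq_zero fun n _ => ?_
  rw [Representation.asModuleEquiv_map_smul,
    fsmul ρ f hf _ (ρ.asModuleEquiv n), hε n, zero_mul]

lemma aux_surj (ρ : Representation R G M)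
    (hproj : Module.Projective (MonoidAlgebra R G) ρ.asModule)
    (x : M) (hx : ∀ g : G, ρ g x = x) : ∃ m : M, ∑ g : G, ρ g m = x := by
  obtain ⟨s, hs⟩ := hproj.out
  set A := MonoidAlgebra R G
  set σA : A := ∑ g : G, MonoidAlgebra.single g 1 with hσA
  set x' : ρ.asModule := ρ.asModuleEquiv.symm x with hx'def
  have hx' : ρ.asModuleEquiv x' = x := ρ.asModuleEquiv.apply_symm_apply x
  have hinv : ∀ g : G, (MonoidAlgebra.single g (1:R)) • x' = x' := by
    intro g
    apply ρ.asModuleEquiv.injective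
    rw [Representation.asModuleEquiv_map_smul, Representation.asAlgebraHom_single, one_smul,
      hx', hx g]
  have hyc : ∀ (n : ρ.asModule) (g : G), MonoidAlgebra.single g (1:R) * (s x' n) = s x' n := by
    intro n g
    have h1 : (MonoidAlgebra.single g (1:R) • s x') n = s x' n := by
      rw [← map_smul, hinv g]
    rw [Finsupp.smul_apply, smul_eq_mul] at h1
    exact h1
  set c : ρ.asModule →₀ A :=
    (s x').mapRange (fun a => MonoidAlgebra.single 1 (a.coeff 1)) (by simp) with hc
  have hyc2 : s x' = σA • c := by
    ext n h'
    rw [Finsupp.smul_apply, Finsupp.mapRange_apply, smul_eq_mul, hσA]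
    exact congrFun (congrArg (fun b => ⇑(MonoidAlgebra.coeff b)) (K1 (s x' n) (hyc n))) h'
  refine ⟨ρ.asModuleEquiv (Finsupp.linearCombination A id c), ?_⟩
  rw [← sigma_smul, ← map_smul, ← hyc2, hs, hx']

lemma factor {N : Type*} [AddCommGroup N] [Module R N]
    (σ' : M →ₗ[R] N) (hsurj : Function.Surjective σ') (f : M →ₗ[R] R)
    (hker : LinearMap.ker σ' ≤ LinearMap.ker f) :
    ∃ f' : N →ₗ[R] R, f' ∘ₗ σ' = f := by
  refine ⟨(Submodule.liftQ (LinearMap.ker σ') f hker) ∘ₗ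
    ((LinearMap.quotKerEquivOfSurjective σ' hsurj).symm : N →ₗ[R] _), ?_⟩
  ext m
  have h1 : (LinearMap.quotKerEquivOfSurjective σ' hsurj)
      (Submodule.Quotient.mk m) = σ' m := rfl
  simp only [LinearMap.comp_apply, LinearMap.coe_comp, Function.comp_apply,
    LinearEquiv.coe_coe]
  rw [← h1, LinearEquiv.symm_apply_apply, Submodule.liftQ_apply]

end DualInvAux6

open DualInvAux6 in

/-- Let `R` be an integral domain, `G` a finite group, and `M` an `R[G]`-module,
finitely generated projective over `R` and projective over `R[G]`.  With `G` acting on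
`Hom_R(M, R)` by `(g•f)(m) = f(g⁻¹•m)`, every `G`-invariant `f` gives a unique functional `f'`
on `M^G` with `f'(σ•m) = f(m)`, and `f ↦ f'` is an `R`-module isomorphism
`(Hom_R(M,R))^G ≅ Hom_R(M^G, R)`. -/
theorem dual_invariants_equiv_dual_of_invariants
    {R : Type*} [CommRing R] [IsDomain R]
    {G : Type*} [Group G] [Fintype G]
    {M : Type*} [AddCommGroup M] [Module R M]
    (ρ : Representation R G M)
    (hfin : Module.Finite R M) (hprojR : Module.Projective R M)
    (hprojRG : Module.Projective (MonoidAlgebra R G) ρ.asModule) :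
    (∀ f ∈ ρ.dual.invariants, ∃! f' : ρ.invariants →ₗ[R] R,
        ∀ (m : M) (x : ρ.invariants), (x : M) = ∑ g : G, ρ g m → f' x = f m) ∧
    ∃ e : ρ.dual.invariants ≃ₗ[R] (ρ.invariants →ₗ[R] R),
        ∀ (f : ρ.dual.invariants) (m : M) (x : ρ.invariants),
          (x : M) = ∑ g : G, ρ g m → e f x = (f : Module.Dual R M) m := by
  classical
  -- the norm map into the invariants
  have hmem : ∀ m : M, (∑ g : G, (ρ g : M →ₗ[R] M)) m ∈ ρ.invariants := by
    intro m
    rw [Representation.mem_invariants]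
    intro h
    rw [LinearMap.sum_apply, map_sum]
    refine Fintype.sum_equiv (Equiv.mulLeft h) _ _ fun g => ?_
    simp [← Module.End.mul_apply, ← map_mul]
  set σ' : M →ₗ[R] ρ.invariants :=
    LinearMap.codRestrict ρ.invariants (∑ g : G, (ρ g : M →ₗ[R] M)) hmem with hσ'
  have hσ'coe : ∀ m : M, (σ' m : M) = ∑ g : G, ρ g m := by
    intro m
    rw [hσ', LinearMap.codRestrict_apply, LinearMap.sum_apply]
  have hσsurj : Function.Surjective σ' := by
    intro x
    obtain ⟨m, hm⟩ := aux_surj ρ hprojRG (x : M) (ρ.mem_invariants _ |>.mp x.2)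
    exact ⟨m, Subtype.ext (by rw [hσ'coe, hm])⟩
  -- invariance of f
  have hinvf : ∀ f : Module.Dual R M, f ∈ ρ.dual.invariants →
      ∀ (g : G) (m : M), f (ρ g m) = f m := by
    intro f hf g m
    have h := (ρ.dual.mem_invariants _).mp hf g⁻¹
    rw [Representation.dual_apply] at h
    conv_rhs => rw [← h]
    simp [Module.Dual.transpose]
  have hker : ∀ f : Module.Dual R M, f ∈ ρ.dual.invariants →
      LinearMap.ker σ' ≤ LinearMap.ker f := by
    intro f hf m hm
    rw [LinearMap.mem_ker] at hm ⊢
    refine aux_ker ρ hprojRG f (hinvf f hf) m ?_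
    rw [← hσ'coe, hm, Submodule.coe_zero]
  have key : ∀ f : ρ.dual.invariants, ∃ f' : ρ.invariants →ₗ[R] R,
      f' ∘ₗ σ' = (f : Module.Dual R M) :=
    fun f => factor σ' hσsurj f.1 (hker f.1 f.2)
  choose E hE using key
  have hE' : ∀ (f : ρ.dual.invariants) (m : M), E f (σ' m) = (f : Module.Dual R M) m :=
    fun f m => LinearMap.congr_fun (hE f) m
  constructor
  · intro f hf
    refine ⟨E ⟨f, hf⟩, ?_, ?_⟩
    · intro m x hx
      have hxm : x = σ' m := Subtype.ext (by rw [hσ'coe, hx])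
      rw [hxm, hE']
    · intro f'' h''
      ext x
      obtain ⟨m, rfl⟩ := hσsurj x
      rw [h'' m (σ' m) (hσ'coe m), hE']
  · have madd : ∀ f g : ρ.dual.invariants, E (f + g) = E f + E g := by
      intro f g
      ext x
      obtain ⟨m, rfl⟩ := hσsurj x
      simp [hE']
    have msmul : ∀ (r : R) (f : ρ.dual.invariants), E (r • f) = r • E f := by
      intro r f
      ext x
      obtain ⟨m, rfl⟩ := hσsurj x
      simp [hE']
    set elin : ρ.dual.invariants →ₗ[R] (ρ.invariants →ₗ[R] R) :=
      { toFun := E, map_add' := madd, map_smul' := msmul } with helin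
    have hinj : Function.Injective elin := by
      intro f g hfg
      apply Subtype.ext
      ext m
      rw [← hE' f m, ← hE' g m]
      show elin f (σ' m) = elin g (σ' m)
      rw [hfg]
    have hsurjE : Function.Surjective elin := by
      intro φ
      have hmemf : (φ ∘ₗ σ' : Module.Dual R M) ∈ ρ.dual.invariants := by
        rw [Representation.mem_invariants]
        intro g
        rw [Representation.dual_apply]
        ext m
        simp only [Module.Dual.transpose, LinearMap.coe_comp, Function.comp_apply,
          LinearMap.flip_apply, LinearMap.llcomp_apply]
        congr 1
        apply Subtype.ext
        rw [hσ'coe, hσ'coe]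
        refine Fintype.sum_equiv (Equiv.mulRight g⁻¹) _ _ fun g' => ?_
        simp [← Module.End.mul_apply, ← map_mul]
      refine ⟨⟨φ ∘ₗ σ', hmemf⟩, ?_⟩
      ext x
      obtain ⟨m, rfl⟩ := hσsurj x
      show E _ (σ' m) = φ (σ' m)
      rw [hE']
      rfl
    refine ⟨LinearEquiv.ofBijective elin ⟨hinj, hsurjE⟩, ?_⟩
    intro f m x hx
    have hxm : x = σ' m := Subtype.ext (by rw [hσ'coe, hx])
    rw [hxm]
    exact hE' f m
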